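/- arXiv:1510.02425 — 2 statements merged into one kernel-verified Lean document; each statement's English description precedes it below -/
import Mathlib

section
/- Let λ2, λ3, λ4 be real numbers and define the quartic polynomials p(y) = λ4·y⁴ − λ3·y³ + λ2·y² + 1 and q(y) = λ4·y⁴ − (4λ4 + λ3)·y³ + (3λ3 + λ2)·y² − 2λ2·y + 1. If q(y) > 0 for all y > 0, then p(y) > 0 for all y > 0. (Equivalently, the set Λ2 of parameter vectors (λ2, λ3, λ4) for which q is positive on (0,∞) is contained in the set Λ1 of parameter vectors for which p is positive on (0,∞).) -/
open Real Filter

/-- Lemma 1 of the paper: if the quartic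
`q(y) = λ4·y⁴ − (4λ4 + λ3)·y³ + (3λ3 + λ2)·y² − 2λ2·y + 1` is positive on `(0, ∞)`,
then so is `p(y) = λ4·y⁴ − λ3·y³ + λ2·y² + 1`; i.e. `Λ2 ⊆ Λ1`. -/
theorem lambda2_subset_lambda1 (l2 l3 l4 : ℝ)
    (hq : ∀ y : ℝ, 0 < y →
      0 < l4 * y ^ 4 - (4 * l4 + l3) * y ^ 3 + (3 * l3 + l2) * y ^ 2 - 2 * l2 * y + 1) :
    ∀ y : ℝ, 0 < y → 0 < l4 * y ^ 4 - l3 * y ^ 3 + l2 * y ^ 2 + 1 := by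
  set P : ℝ → ℝ := fun x => l4 * x ^ 4 - l3 * x ^ 3 + l2 * x ^ 2 + 1 with hPdef
  set g : ℝ → ℝ := fun x => P x * Real.exp (-x) with hgdef
  -- derivative of g
  have hgderiv : ∀ x : ℝ, HasDerivAt g
      (-((l4 * x ^ 4 - (4 * l4 + l3) * x ^ 3 + (3 * l3 + l2) * x ^ 2 - 2 * l2 * x + 1)
        * Real.exp (-x))) x := by
    intro x
    have hP : HasDerivAt P (l4 * (4 * x ^ 3) - l3 * (3 * x ^ 2) + l2 * (2 * x ^ 1)) x := by
      have h4 := (hasDerivAt_pow 4 x).const_mul l4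
      have h3 := (hasDerivAt_pow 3 x).const_mul l3
      have h2 := (hasDerivAt_pow 2 x).const_mul l2
      have := ((h4.sub h3).add h2).add_const 1
      simpa [hPdef] using this
    have hE : HasDerivAt (fun x : ℝ => Real.exp (-x)) (-Real.exp (-x)) x := by
      have := (Real.hasDerivAt_exp (-x)).comp x ((hasDerivAt_id x).neg)
      simpa [Function.comp_def] using this
    have : HasDerivAt (fun y => P y * Real.exp (-y)) _ x := hP.mul hE
    convert this using 1
    simp only [hPdef]
    ring
  -- g tends to 0 at infinity
  have htend : Tendsto g atTop (nhds 0) := by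
    have h4 := tendsto_pow_mul_exp_neg_atTop_nhds_zero 4
    have h3 := tendsto_pow_mul_exp_neg_atTop_nhds_zero 3
    have h2 := tendsto_pow_mul_exp_neg_atTop_nhds_zero 2
    have h0 : Tendsto (fun x : ℝ => Real.exp (-x)) atTop (nhds 0) := by
      simpa using tendsto_exp_neg_atTop_nhds_zero
    have : Tendsto (fun x : ℝ => l4 * (x ^ 4 * Real.exp (-x)) - l3 * (x ^ 3 * Real.exp (-x))
        + l2 * (x ^ 2 * Real.exp (-x)) + Real.exp (-x)) atTop
        (nhds (l4 * 0 - l3 * 0 + l2 * 0 + 0)) :=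
      (((h4.const_mul l4).sub (h3.const_mul l3)).add (h2.const_mul l2)).add h0
    have heq : (fun x : ℝ => l4 * (x ^ 4 * Real.exp (-x)) - l3 * (x ^ 3 * Real.exp (-x))
        + l2 * (x ^ 2 * Real.exp (-x)) + Real.exp (-x)) = g := by
      funext x; simp only [hgdef, hPdef]; ring
    rw [heq] at this
    simpa using this
  -- g is strictly antitone on [y, ∞) for y > 0
  have hanti : ∀ y : ℝ, 0 < y → StrictAntiOn g (Set.Ici y) := by
    intro y hy
    apply strictAntiOn_of_deriv_neg (convex_Ici y)
    · exact fun x _ => ((hgderiv x).differentiableAt).continuousAt.continuousWithinAt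
    · intro x hx
      rw [interior_Ici] at hx
      rw [(hgderiv x).deriv]
      have hx0 : 0 < x := hy.trans hx
      exact neg_neg_of_pos (mul_pos (hq x hx0) (Real.exp_pos _))
  intro y hy
  -- g (y+1) ≥ 0 since g is antitone on [y+1, ∞) and tends to 0
  have h1 : (0 : ℝ) ≤ g (y + 1) := by
    refine le_of_tendsto htend ?_
    filter_upwards [eventually_ge_atTop (y + 1)] with x hx
    rcases eq_or_lt_of_le hx with h | h
    · exact le_of_eq (by rw [h])
    · exact le_of_lt ((hanti (y + 1) (by linarith)) (Set.self_mem_Ici) (le_of_lt h) h)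
  have h2 : g (y + 1) < g y :=
    (hanti y hy) Set.self_mem_Ici (by linarith : y ≤ y + 1) (by linarith)
  have hgy : 0 < g y := lt_of_le_of_lt h1 h2
  have : 0 < g y * Real.exp y := mul_pos hgy (Real.exp_pos y)
  have heq : g y * Real.exp y = P y := by
    simp only [hgdef]
    rw [mul_assoc, ← Real.exp_add]
    simp
  rw [heq] at this
  exact this
end

section
/- For every real y, y² − 6y + 12 > 0. Moreover, for every y > 0 and every λ2 ∈ ℝ, setting λ3 = (2(y³ − 5y² + 8y)·λ2 + 4y − 12) / (y²·(y² − 6y + 12)) and λ4 = ((y³ − 4y² + 6y)·λ2 + 3y − 6) / (y³·(y² − 6y + 12)), the quartic q(u) = λ4·u⁴ − (4λ4 + λ3)·u³ + (3λ3 + λ2)·u² − 2λ2·u + 1 satisfies q(y) = 0 and q′(y) = 0; that is, y is a double root of q. -/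
/-- `y² − 6y + 12 > 0` for all real `y`, and the explicit parametrization
`λ3(y, λ2)`, `λ4(y, λ2)` of the boundary surface makes `y` a double root of the
quartic `q` (i.e. `q(y) = 0` and `q′(y) = 0`), as in the proof of Lemma 2. -/
theorem boundary_parametrization_double_root :
    (∀ y : ℝ, 0 < y ^ 2 - 6 * y + 12) ∧
    (∀ y : ℝ, 0 < y → ∀ l2 l3 l4 : ℝ,
      l3 = (2 * (y ^ 3 - 5 * y ^ 2 + 8 * y) * l2 + 4 * y - 12)
            / (y ^ 2 * (y ^ 2 - 6 * y + 12)) →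
      l4 = ((y ^ 3 - 4 * y ^ 2 + 6 * y) * l2 + 3 * y - 6)
            / (y ^ 3 * (y ^ 2 - 6 * y + 12)) →
      (l4 * y ^ 4 - (4 * l4 + l3) * y ^ 3 + (3 * l3 + l2) * y ^ 2 - 2 * l2 * y + 1 = 0 ∧
       deriv (fun u : ℝ =>
          l4 * u ^ 4 - (4 * l4 + l3) * u ^ 3 + (3 * l3 + l2) * u ^ 2 - 2 * l2 * u + 1) y
        = 0)) := by
  have hpos : ∀ y : ℝ, 0 < y ^ 2 - 6 * y + 12 := by
    intro y; nlinarith [sq_nonneg (y - 3)]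
  refine ⟨hpos, ?_⟩
  intro y hy l2 l3 l4 h3 h4
  have hq := hpos y
  have hy0 : y ≠ 0 := ne_of_gt hy
  have hq0 : y ^ 2 - 6 * y + 12 ≠ 0 := ne_of_gt hq
  have hq2 : y * (y - 6) + 12 ≠ 0 := by nlinarith [sq_nonneg (y - 3)]
  have hderiv : deriv (fun u : ℝ =>
      l4 * u ^ 4 - (4 * l4 + l3) * u ^ 3 + (3 * l3 + l2) * u ^ 2 - 2 * l2 * u + 1) y
      = 4 * l4 * y ^ 3 - 3 * (4 * l4 + l3) * y ^ 2 + 2 * (3 * l3 + l2) * y - 2 * l2 := by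
    have : HasDerivAt (fun u : ℝ =>
        l4 * u ^ 4 - (4 * l4 + l3) * u ^ 3 + (3 * l3 + l2) * u ^ 2 - 2 * l2 * u + 1)
        (4 * l4 * y ^ 3 - 3 * (4 * l4 + l3) * y ^ 2 + 2 * (3 * l3 + l2) * y - 2 * l2) y := by
      have h := (((((hasDerivAt_pow 4 y).const_mul l4).sub
        ((hasDerivAt_pow 3 y).const_mul (4 * l4 + l3))).add
        ((hasDerivAt_pow 2 y).const_mul (3 * l3 + l2))).sub
        ((hasDerivAt_id y).const_mul (2 * l2))).add_const 1
      convert h using 1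
      · rfl
      · ext u; simp
      · norm_num
      · norm_num; ring
    exact this.deriv
  subst h3 h4
  constructor
  · field_simp
    ring
  · rw [hderiv]
    field_simp
    ring
end
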